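/- arXiv:2205.02312 — 2 statements merged into one kernel-verified Lean document; each statement's English description precedes it below -/
import Mathlib

section
/- Let H_R and H_I be real symmetric n×n matrices with H_R invertible and H_I positive semi-definite. Then the complex matrix Hess = H_R + i·H_I is invertible (det(Hess) ≠ 0). -/
open Matrix ComplexOrder

lemma map_isHermitian_of_isSymm {n : ℕ} (A : Matrix (Fin n) (Fin n) ℝ) (hA : A.IsSymm) :
    (A.map (Complex.ofReal)).IsHermitian := by
  unfold Matrix.IsHermitian
  rw [← Matrix.conjTranspose_map Complex.ofReal (fun a => by simp [Complex.conj_ofReal])]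
  rw [show Aᴴ = A from hA]

lemma map_posSemidef {n : ℕ} (A : Matrix (Fin n) (Fin n) ℝ) (hA : A.PosSemidef) :
    (A.map (Complex.ofReal)).PosSemidef := by
  obtain ⟨B, hB⟩ : ∃ B : Matrix (Fin n) (Fin n) ℝ, A = Bᴴ * B := by
    open scoped MatrixOrder in
    obtain ⟨X, hX, -, hXA⟩ := CFC.exists_sqrt_of_isSelfAdjoint_of_quasispectrumRestricts
      hA.isHermitian (QuasispectrumRestricts.nnreal_of_nonneg (sub_zero A ▸ hA.nonneg))
    exact ⟨X, by rw [← star_eq_conjTranspose, hX.star_eq]; exact hXA.symm⟩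
  have h : A.map (Complex.ofReal) =
      (B.map Complex.ofReal)ᴴ * (B.map Complex.ofReal) := by
    rw [hB]
    ext i j
    simp [Matrix.mul_apply, conjTranspose_apply, Matrix.map_apply, Complex.conj_ofReal]
  rw [h]
  exact Matrix.posSemidef_conjTranspose_mul_self _

/-- If `H_R` is a real symmetric invertible matrix and `H_I` is a real symmetric positive
semi-definite matrix, then `Hess = H_R + i H_I` is invertible: `det Hess ≠ 0`. -/
theorem det_hess_ne_zero (n : ℕ) (HR HI : Matrix (Fin n) (Fin n) ℝ)
    (hHRsymm : HR.IsSymm) (hHRinv : IsUnit HR.det)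
    (hHIsymm : HI.IsSymm) (hHI : HI.PosSemidef) :
    (HR.map (Complex.ofReal) + Complex.I • HI.map (Complex.ofReal)).det ≠ 0 := by
  set HRc := HR.map (Complex.ofReal) with hHRc
  set HIc := HI.map (Complex.ofReal) with hHIc
  intro hdet
  obtain ⟨v, hv, hMv⟩ := (Matrix.exists_mulVec_eq_zero_iff).mpr hdet
  have hHRcherm : HRc.IsHermitian := map_isHermitian_of_isSymm HR hHRsymm
  have hHIcpsd : HIc.PosSemidef := map_posSemidef HI hHI
  set a := star v ⬝ᵥ (HRc *ᵥ v) with ha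
  set b := star v ⬝ᵥ (HIc *ᵥ v) with hb
  have hdot : a + Complex.I * b = 0 := by
    have h := congrArg (fun w => star v ⬝ᵥ w) hMv
    simpa [ha, hb, Matrix.add_mulVec, Matrix.smul_mulVec, dotProduct_add,
      dotProduct_smul, smul_eq_mul] using h
  have haim : a.im = 0 := by
    have hstar : star a = a := by
      conv_lhs => rw [ha, ← Matrix.star_dotProduct_star, star_star, Matrix.star_mulVec,
        hHRcherm.eq, ← Matrix.dotProduct_mulVec]
    exact Complex.conj_eq_iff_im.mp hstar
  have hbnon := Complex.nonneg_iff.mp (hHIcpsd.dotProduct_mulVec_nonneg v)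
  have hbim : b.im = 0 := hbnon.2.symm
  have him : a.im + b.re = 0 := by
    have h := congrArg Complex.im hdot
    simpa [Complex.add_im, Complex.mul_im, hbim] using h
  have hbre0 : b.re = 0 := by linarith [hbnon.1]
  have hbzero : b = 0 := Complex.ext hbre0 hbim
  have hHIv : HIc *ᵥ v = 0 := (hHIcpsd.dotProduct_mulVec_zero_iff v).mp hbzero
  have hHRv : HRc *ᵥ v = 0 := by
    have h := hMv
    rw [Matrix.add_mulVec, Matrix.smul_mulVec, hHIv] at h
    simpa using h
  have hdetHRc : HRc.det ≠ 0 := by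
    have h1 : HRc.det = ((HR.det : ℝ) : ℂ) := by
      have h2 := RingHom.map_det Complex.ofRealHom HR
      rw [RingHom.mapMatrix_apply] at h2
      exact h2.symm
    rw [h1]
    simpa using hHRinv.ne_zero
  exact hdetHRc (Matrix.exists_mulVec_eq_zero_iff.mp ⟨v, hv, hHRv⟩)
end

section
/- Let P : [t₁, t] → ℝ^d be C¹ in a parameter t₁ with Q(τ, t₁) = ∫_{t₁}^{τ} P(s, t₁) ds type relations, and suppose ∂_{t₁}Q(τ,t₁) = ∫_{t₁}^{τ} ∂_{t₁}P(s,t₁) ds and P(τ,t₁) - P(t,t₁) = ∫_{τ}^{t} g(s,t₁) ds where g(s,t₁) = ∇V₁(Q(s,t₁)). Then ∫_{t₁}^{t} [P(τ,t₁)·∂_{t₁}P(τ,t₁) - g(τ,t₁)·∂_{t₁}Q(τ,t₁)] dτ = P(t,t₁)·∂_{t₁}Q(t,t₁). -/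
open intervalIntegral RealInnerProductSpace

/-- Along a trajectory after the hop at time `t₁`, if
`∂_{t₁}Q(τ,t₁) = ∫_{t₁}^τ ∂_{t₁}P(s,t₁) ds` and
`P(τ,t₁) - P(t,t₁) = ∫_τ^t g(s,t₁) ds` with `g = ∇V₁(Q(·,t₁))`, then
`∫_{t₁}^t [P(τ)·∂_{t₁}P(τ) - g(τ)·∂_{t₁}Q(τ)] dτ = P(t)·∂_{t₁}Q(t)`. -/
theorem boundary_term_identity (d : ℕ) (t₁ t : ℝ) (ht : t₁ ≤ t)
    (P dP dQ g : ℝ → EuclideanSpace ℝ (Fin d))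
    (hPcont : ContinuousOn P (Set.Icc t₁ t))
    (hdPcont : ContinuousOn dP (Set.Icc t₁ t))
    (hgcont : ContinuousOn g (Set.Icc t₁ t))
    (hdQ : ∀ τ ∈ Set.Icc t₁ t, dQ τ = ∫ s in t₁..τ, dP s)
    (hP : ∀ τ ∈ Set.Icc t₁ t, P τ - P t = ∫ s in τ..t, g s) :
    (∫ τ in t₁..t, (⟪P τ, dP τ⟫ - ⟪g τ, dQ τ⟫)) = ⟪P t, dQ t⟫ := by
  have huIcc : Set.uIcc t₁ t = Set.Icc t₁ t := Set.uIcc_of_le ht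
  have hdPint : IntervalIntegrable dP MeasureTheory.volume t₁ t :=
    (huIcc ▸ hdPcont).intervalIntegrable
  have hgint : IntervalIntegrable g MeasureTheory.volume t₁ t :=
    (huIcc ▸ hgcont).intervalIntegrable
  -- auxiliary functions
  set Pa : ℝ → EuclideanSpace ℝ (Fin d) := fun τ => P t + ∫ s in τ..t, g s with hPa
  set Qa : ℝ → EuclideanSpace ℝ (Fin d) := fun τ => ∫ s in t₁..τ, dP s with hQa
  set G : ℝ → ℝ := fun τ => ⟪Pa τ, Qa τ⟫ with hG
  have hPeq : ∀ τ ∈ Set.Icc t₁ t, P τ = Pa τ := fun τ hτ => by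
    have := hP τ hτ; simp only [hPa]; rw [← this]; abel
  have hQeq : ∀ τ ∈ Set.Icc t₁ t, dQ τ = Qa τ := hdQ
  -- derivative of G at interior points
  have hderiv : ∀ τ ∈ Set.Ioo t₁ t,
      HasDerivAt G (⟪Pa τ, dP τ⟫ + ⟪-g τ, Qa τ⟫) τ := by
    intro τ hτ
    have hmem : Set.Icc t₁ t ∈ nhds τ := Icc_mem_nhds hτ.1 hτ.2
    have hτI : τ ∈ Set.Icc t₁ t := Set.Ioo_subset_Icc_self hτ
    have hcg : ContinuousAt g τ := hgcont.continuousAt hmem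
    have hcdP : ContinuousAt dP τ := hdPcont.continuousAt hmem
    have hgint' : IntervalIntegrable g MeasureTheory.volume τ t :=
      hgint.mono_set (by rw [huIcc, Set.uIcc_of_le hτ.2.le]; exact Set.Icc_subset_Icc hτI.1 le_rfl)
    have hdPint' : IntervalIntegrable dP MeasureTheory.volume t₁ τ :=
      hdPint.mono_set (by rw [huIcc, Set.uIcc_of_le hτI.1]; exact Set.Icc_subset_Icc le_rfl hτ.2.le)
    have hQ' : HasDerivAt Qa (dP τ) τ :=
      integral_hasDerivAt_right hdPint'
        ⟨Set.Icc t₁ t, hmem, hdPcont.aestronglyMeasurable measurableSet_Icc⟩ hcdP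
    have hP' : HasDerivAt Pa (-g τ) τ := by
      have : HasDerivAt (fun u => ∫ s in u..t, g s) (-g τ) τ :=
        integral_hasDerivAt_left hgint' ⟨Set.Icc t₁ t, hmem, hgcont.aestronglyMeasurable measurableSet_Icc⟩ hcg
      simpa [hPa] using (this.const_add (P t))
    exact hP'.inner ℝ hQ'
  -- continuity of G on Icc
  have hPacont : ContinuousOn Pa (Set.Icc t₁ t) := by
    rw [← huIcc]
    exact continuousOn_const.add (continuousOn_primitive_interval_left (huIcc ▸ hgcont.integrableOn_compact isCompact_Icc))
  have hQacont : ContinuousOn Qa (Set.Icc t₁ t) := by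
    rw [← huIcc]
    exact continuousOn_primitive_interval (huIcc ▸ hdPcont.integrableOn_compact isCompact_Icc)
  have hGcont : ContinuousOn G (Set.Icc t₁ t) := hPacont.inner hQacont
  -- the derivative function is interval integrable
  have hG'cont : ContinuousOn (fun τ => ⟪Pa τ, dP τ⟫ + ⟪-g τ, Qa τ⟫) (Set.Icc t₁ t) :=
    (hPacont.inner hdPcont).add (hgcont.neg.inner hQacont)
  have hG'int : IntervalIntegrable (fun τ => ⟪Pa τ, dP τ⟫ + ⟪-g τ, Qa τ⟫)
      MeasureTheory.volume t₁ t := (huIcc ▸ hG'cont).intervalIntegrable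
  have key : (∫ τ in t₁..t, (⟪Pa τ, dP τ⟫ + ⟪-g τ, Qa τ⟫)) = G t - G t₁ :=
    integral_eq_sub_of_hasDeriv_right_of_le ht hGcont
      (fun τ hτ => (hderiv τ hτ).hasDerivWithinAt) hG'int
  have hGt₁ : G t₁ = 0 := by simp [hG, hQa]
  have hcongr : (∫ τ in t₁..t, (⟪P τ, dP τ⟫ - ⟪g τ, dQ τ⟫))
      = ∫ τ in t₁..t, (⟪Pa τ, dP τ⟫ + ⟪-g τ, Qa τ⟫) := by
    apply integral_congr
    intro τ hτ
    rw [huIcc] at hτ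
    simp only [hPeq τ hτ, hQeq τ hτ, inner_neg_left]
    ring
  rw [hcongr, key, hGt₁, sub_zero, hG]
  have htI : t ∈ Set.Icc t₁ t := Set.right_mem_Icc.2 ht
  rw [hQeq t htI, hPeq t htI]
end
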